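/- Let μ be the Lie bracket on ℝ^7 with nonzero basis brackets [e1,e2]=e4, [e1,e4]=e5, [e1,e5]=e6, [e1,e6]=e7, [e2,e3]=e5+e7, [e3,e4]=-e6, [e3,e5]=-e7. Then φ = diag(0,1,0,1,1,1,1) is a derivation of (ℝ^7,μ) and φ is pre-Einstein, i.e. trace(φ∘ψ) = trace(ψ) for every derivation ψ of (ℝ^7,μ). -/

import Mathlib

open Finset

noncomputable section

/-- `ℝ⁷` with its standard basis and standard inner product. -/
abbrev V7 : Type := Fin 7 → ℝ

/-- The standard basis vector `e i`. -/
def e (i : Fin 7) : V7 := Pi.single i 1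

/-- The standard inner product on `ℝ⁷`. -/
def dot (x y : V7) : ℝ := ∑ i, x i * y i

/-- Structure constants built from a list of entries `(i, j, k, a)`, each meaning that
`μ (e i) (e j)` has component `a` along `e k` (and `μ (e j) (e i)` has component `-a`);
all unlisted basis brackets are `0`. -/
def toC (L : List (Fin 7 × Fin 7 × Fin 7 × ℝ)) (i j k : Fin 7) : ℝ :=
  (L.map fun t =>
      (if t.1 = i ∧ t.2.1 = j ∧ t.2.2.1 = k then t.2.2.2 else 0)
    - (if t.1 = j ∧ t.2.1 = i ∧ t.2.2.1 = k then t.2.2.2 else 0)).sum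

/-- The bilinear skew-symmetric map on `ℝ⁷` with structure constants `c`. -/
def br (c : Fin 7 → Fin 7 → Fin 7 → ℝ) (x y : V7) : V7 :=
  fun k => ∑ i, ∑ j, x i * y j * c i j k

lemma br_add_left (c : Fin 7 → Fin 7 → Fin 7 → ℝ) (x x' y : V7) :
    br c (x + x') y = br c x y + br c x' y := by
  funext k
  simp only [br, Pi.add_apply, ← Finset.sum_add_distrib]
  exact Finset.sum_congr rfl fun i _ => Finset.sum_congr rfl fun j _ => by ring

lemma br_smul_left (c : Fin 7 → Fin 7 → Fin 7 → ℝ) (r : ℝ) (x y : V7) :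
    br c (r • x) y = r • br c x y := by
  funext k
  simp only [br, Pi.smul_apply, smul_eq_mul, Finset.mul_sum]
  exact Finset.sum_congr rfl fun i _ => Finset.sum_congr rfl fun j _ => by ring

lemma br_add_right (c : Fin 7 → Fin 7 → Fin 7 → ℝ) (x y y' : V7) :
    br c x (y + y') = br c x y + br c x y' := by
  funext k
  simp only [br, Pi.add_apply, ← Finset.sum_add_distrib]
  exact Finset.sum_congr rfl fun i _ => Finset.sum_congr rfl fun j _ => by ring

lemma br_smul_right (c : Fin 7 → Fin 7 → Fin 7 → ℝ) (r : ℝ) (x y : V7) :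
    br c x (r • y) = r • br c x y := by
  funext k
  simp only [br, Pi.smul_apply, smul_eq_mul, Finset.mul_sum]
  exact Finset.sum_congr rfl fun i _ => Finset.sum_congr rfl fun j _ => by ring

lemma br_zero_left (c : Fin 7 → Fin 7 → Fin 7 → ℝ) (y : V7) : br c 0 y = 0 := by
  funext k; simp [br]

lemma br_zero_right (c : Fin 7 → Fin 7 → Fin 7 → ℝ) (x : V7) : br c x 0 = 0 := by
  funext k; simp [br]

/-- The space of derivations of the algebra `(ℝ⁷, br c)`, i.e. the linear maps `D` with
`D (μ x y) = μ (D x) y + μ x (D y)` for all `x, y`, as a submodule of the endomorphisms. -/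
def derivations (c : Fin 7 → Fin 7 → Fin 7 → ℝ) : Submodule ℝ (Module.End ℝ V7) where
  carrier := {D | ∀ x y, D (br c x y) = br c (D x) y + br c x (D y)}
  add_mem' := by
    intro D E hD hE x y
    simp only [LinearMap.add_apply, hD x y, hE x y, br_add_left, br_add_right]
    abel
  zero_mem' := by
    intro x y
    simp [br_zero_left, br_zero_right]
  smul_mem' := by
    intro r D hD x y
    simp only [LinearMap.smul_apply, hD x y, smul_add, br_smul_left, br_smul_right]

/-- The Jacobi identity for the bracket `br c`. -/
def Jacobi (c : Fin 7 → Fin 7 → Fin 7 → ℝ) : Prop :=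
  ∀ x y z : V7, br c (br c x y) z + br c (br c y z) x + br c (br c z x) y = 0

/-- Skew-symmetry of the bracket `br c`. -/
def Skew (c : Fin 7 → Fin 7 → Fin 7 → ℝ) : Prop :=
  ∀ x y : V7, br c x y = - br c y x

/-- The diagonal endomorphism `diag (a 1, …, a 7)` of `ℝ⁷`, `e i ↦ a i • e i`. -/
def diagL (a : Fin 7 → ℝ) : Module.End ℝ V7 :=
  LinearMap.pi fun i => a i • LinearMap.proj i

/-- Structure constants of the bracket with nonzero basis brackets
`[e1,e2]=e4, [e1,e4]=e5, [e1,e5]=e6, [e1,e6]=e7, [e2,e3]=e5+e7, [e3,e4]=-e6, [e3,e5]=-e7`. -/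
def c2 : Fin 7 → Fin 7 → Fin 7 → ℝ :=
  toC [(0, 1, 3, (1:ℝ)),
   (0, 3, 4, 1),
   (0, 4, 5, 1),
   (0, 5, 6, 1),
   (1, 2, 4, 1),
   (1, 2, 6, 1),
   (2, 3, 5, -1),
   (2, 4, 6, -1)]

def toCZ (L : List (Fin 7 × Fin 7 × Fin 7 × ℤ)) (i j k : Fin 7) : ℤ :=
  (L.map fun t =>
      (if t.1 = i ∧ t.2.1 = j ∧ t.2.2.1 = k then t.2.2.2 else 0)
    - (if t.1 = j ∧ t.2.1 = i ∧ t.2.2.1 = k then t.2.2.2 else 0)).sum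

def LZ : List (Fin 7 × Fin 7 × Fin 7 × ℤ) :=
  [(0, 1, 3, 1), (0, 3, 4, 1), (0, 4, 5, 1), (0, 5, 6, 1),
   (1, 2, 4, 1), (1, 2, 6, 1), (2, 3, 5, -1), (2, 4, 6, -1)]

def cZ : Fin 7 → Fin 7 → Fin 7 → ℤ := toCZ LZ

lemma toC_cast (L : List (Fin 7 × Fin 7 × Fin 7 × ℤ)) (i j k : Fin 7) :
    toC (L.map fun t => (t.1, t.2.1, t.2.2.1, (t.2.2.2 : ℝ))) i j k = (toCZ L i j k : ℝ) := by
  induction L with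
  | nil => simp [toC, toCZ]
  | cons h t ih =>
    simp only [toC, toCZ, List.map_cons, List.map_map, List.sum_cons] at ih ⊢
    rw [Int.cast_add, ← ih]
    push_cast [apply_ite (fun z : ℤ => (z : ℝ))]
    ring

lemma c2_cast : ∀ i j k, c2 i j k = (cZ i j k : ℝ) := by
  have hL : ((LZ.map fun t => (t.1, t.2.1, t.2.2.1, ((t.2.2.2 : ℤ) : ℝ)))) =
      [((0:Fin 7), (1:Fin 7), (3:Fin 7), (1:ℝ)), (0, 3, 4, 1), (0, 4, 5, 1), (0, 5, 6, 1),
       (1, 2, 4, 1), (1, 2, 6, 1), (2, 3, 5, -1), (2, 4, 6, -1)] := by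
    simp [LZ]
  intro i j k
  rw [show c2 = toC (LZ.map fun t => (t.1, t.2.1, t.2.2.1, ((t.2.2.2 : ℤ) : ℝ))) by rw [hL]; rfl]
  exact toC_cast LZ i j k

lemma jacZ : ∀ i j l k : Fin 7,
    (∑ m, (cZ i j m * cZ m l k + cZ j l m * cZ m i k + cZ l i m * cZ m j k)) = 0 := by
  decide

lemma derZ : ∀ i j k : Fin 7,
    (![0, 1, 0, 1, 1, 1, 1] : Fin 7 → ℤ) k * cZ i j k
      = (![0, 1, 0, 1, 1, 1, 1] : Fin 7 → ℤ) i * cZ i j k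
        + (![0, 1, 0, 1, 1, 1, 1] : Fin 7 → ℤ) j * cZ i j k := by
  decide

lemma toC_skew (L : List (Fin 7 × Fin 7 × Fin 7 × ℝ)) (i j k : Fin 7) :
    toC L j i k = - toC L i j k := by
  induction L with
  | nil => simp [toC]
  | cons h t ih =>
    simp only [toC, List.map_cons, List.sum_cons] at ih ⊢
    rw [ih]; ring

lemma c2_skew (i j k : Fin 7) : c2 j i k = - c2 i j k := toC_skew _ i j k

lemma skew_c2 : ∀ x y : V7, br c2 x y = - br c2 y x := by
  intro x y
  funext k
  simp only [br, Pi.neg_apply, ← Finset.sum_neg_distrib]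
  rw [Finset.sum_comm]
  refine Finset.sum_congr rfl fun i _ => Finset.sum_congr rfl fun j _ => ?_
  rw [c2_skew j i k]; ring

lemma sum4 (f : Fin 7 → Fin 7 → Fin 7 → Fin 7 → ℝ) :
    ∑ m, ∑ l, ∑ i, ∑ j, f i j l m = ∑ i, ∑ j, ∑ l, ∑ m, f i j l m :=
  calc ∑ m, ∑ l, ∑ i, ∑ j, f i j l m
      = ∑ l, ∑ m, ∑ i, ∑ j, f i j l m := Finset.sum_comm
    _ = ∑ l, ∑ i, ∑ m, ∑ j, f i j l m :=
        Finset.sum_congr rfl fun l _ => Finset.sum_comm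
    _ = ∑ l, ∑ i, ∑ j, ∑ m, f i j l m :=
        Finset.sum_congr rfl fun l _ => Finset.sum_congr rfl fun i _ => Finset.sum_comm
    _ = ∑ i, ∑ l, ∑ j, ∑ m, f i j l m := Finset.sum_comm
    _ = ∑ i, ∑ j, ∑ l, ∑ m, f i j l m :=
        Finset.sum_congr rfl fun i _ => Finset.sum_comm

lemma sum3 (g : Fin 7 → Fin 7 → Fin 7 → ℝ) :
    ∑ a, ∑ b, ∑ c, g a b c = ∑ c, ∑ a, ∑ b, g a b c :=
  calc ∑ a, ∑ b, ∑ c, g a b c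
      = ∑ a, ∑ c, ∑ b, g a b c := Finset.sum_congr rfl fun a _ => Finset.sum_comm
    _ = ∑ c, ∑ a, ∑ b, g a b c := Finset.sum_comm

lemma expand (c : Fin 7 → Fin 7 → Fin 7 → ℝ) (x y z : V7) (k : Fin 7) :
    br c (br c x y) z k = ∑ i, ∑ j, ∑ l, x i * y j * z l * (∑ m, c i j m * c m l k) := by
  simp only [br, Finset.sum_mul, Finset.mul_sum]
  rw [sum4 (fun i j l m => x i * y j * c i j m * z l * c m l k)]
  exact Finset.sum_congr rfl fun i _ => Finset.sum_congr rfl fun j _ =>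
    Finset.sum_congr rfl fun l _ => Finset.sum_congr rfl fun m _ => by ring

lemma jacobi_c2 : ∀ x y z : V7,
    br c2 (br c2 x y) z + br c2 (br c2 y z) x + br c2 (br c2 z x) y = 0 := by
  have jacR : ∀ i j l k : Fin 7,
      (∑ m, (c2 i j m * c2 m l k + c2 j l m * c2 m i k + c2 l i m * c2 m j k)) = 0 := by
    intro i j l k
    have := jacZ i j l k
    have h : ((∑ m, (cZ i j m * cZ m l k + cZ j l m * cZ m i k + cZ l i m * cZ m j k) : ℤ) : ℝ)
        = 0 := by rw [this]; norm_num
    rw [← h]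
    push_cast
    exact Finset.sum_congr rfl fun m _ => by simp [c2_cast]
  intro x y z
  funext k
  have h1 := expand c2 x y z k
  have h2 := expand c2 y z x k
  have h3 := expand c2 z x y k
  rw [sum3 (fun a b l => y a * z b * x l * (∑ m, c2 a b m * c2 m l k))] at h2
  rw [sum3 (fun b l a => z b * x l * y a * (∑ m, c2 b l m * c2 m a k))] at h3
  rw [sum3 (fun c a b => z a * x b * y c * (∑ m, c2 a b m * c2 m c k))] at h3
  simp only [Pi.add_apply, Pi.zero_apply, h1, h2, h3, ← Finset.sum_add_distrib]
  refine Finset.sum_eq_zero fun i _ => Finset.sum_eq_zero fun j _ => Finset.sum_eq_zero fun l _ => ?_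
  have := jacR i j l k
  rw [Finset.sum_add_distrib, Finset.sum_add_distrib] at this
  linear_combination x i * y j * z l * this

lemma diagL_apply (a : Fin 7 → ℝ) (v : V7) (k : Fin 7) : diagL a v k = a k * v k := rfl

lemma aR_cast (k : Fin 7) :
    (![0, 1, 0, 1, 1, 1, 1] : Fin 7 → ℝ) k = ((![0, 1, 0, 1, 1, 1, 1] : Fin 7 → ℤ) k : ℝ) := by
  fin_cases k <;> norm_num

lemma derR (i j k : Fin 7) :
    (![0, 1, 0, 1, 1, 1, 1] : Fin 7 → ℝ) k * c2 i j k
      = (![0, 1, 0, 1, 1, 1, 1] : Fin 7 → ℝ) i * c2 i j k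
        + (![0, 1, 0, 1, 1, 1, 1] : Fin 7 → ℝ) j * c2 i j k := by
  rw [aR_cast, aR_cast, aR_cast, c2_cast]
  push_cast
  exact_mod_cast congrArg (fun z : ℤ => (z : ℝ)) (derZ i j k)

lemma phi_der : ∀ x y : V7,
    diagL ![0, 1, 0, 1, 1, 1, 1] (br c2 x y)
      = br c2 (diagL ![0, 1, 0, 1, 1, 1, 1] x) y + br c2 x (diagL ![0, 1, 0, 1, 1, 1, 1] y) := by
  intro x y
  funext k
  simp only [diagL_apply, br, Pi.add_apply, Finset.mul_sum, ← Finset.sum_add_distrib]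
  refine Finset.sum_congr rfl fun i _ => Finset.sum_congr rfl fun j _ => ?_
  linear_combination x i * y j * derR i j k



lemma br_e (c : Fin 7 → Fin 7 → Fin 7 → ℝ) (a b k : Fin 7) : br c (e a) (e b) k = c a b k := by
  simp [br, e, Pi.single_apply]

lemma br_er (c : Fin 7 → Fin 7 → Fin 7 → ℝ) (v : V7) (b k : Fin 7) :
    br c v (e b) k = ∑ i, v i * c i b k := by
  simp [br, e, Pi.single_apply]

lemma br_el (c : Fin 7 → Fin 7 → Fin 7 → ℝ) (v : V7) (a k : Fin 7) :
    br c (e a) v k = ∑ j, v j * c a j k := by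
  simp [br, e, Pi.single_apply]

lemma hb01 : br c2 (e 0) (e 1) = e 3 := by
  funext k
  rw [br_e, c2_cast, show cZ 0 1 k = if k = 3 then 1 else 0 by revert k; decide]
  simp [e, Pi.single_apply, apply_ite (fun z : ℤ => (z : ℝ))]

lemma hb03 : br c2 (e 0) (e 3) = e 4 := by
  funext k
  rw [br_e, c2_cast, show cZ 0 3 k = if k = 4 then 1 else 0 by revert k; decide]
  simp [e, Pi.single_apply, apply_ite (fun z : ℤ => (z : ℝ))]

lemma hb04 : br c2 (e 0) (e 4) = e 5 := by
  funext k
  rw [br_e, c2_cast, show cZ 0 4 k = if k = 5 then 1 else 0 by revert k; decide]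
  simp [e, Pi.single_apply, apply_ite (fun z : ℤ => (z : ℝ))]

lemma hb05 : br c2 (e 0) (e 5) = e 6 := by
  funext k
  rw [br_e, c2_cast, show cZ 0 5 k = if k = 6 then 1 else 0 by revert k; decide]
  simp [e, Pi.single_apply, apply_ite (fun z : ℤ => (z : ℝ))]

lemma hb12 : br c2 (e 1) (e 2) = e 4 + e 6 := by
  funext k
  rw [br_e, c2_cast, show cZ 1 2 k = (if k = 4 then 1 else 0) + (if k = 6 then 1 else 0) by revert k; decide]
  simp [e, Pi.single_apply, apply_ite (fun z : ℤ => (z : ℝ))]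

lemma trace_eq (f : Module.End ℝ V7) : LinearMap.trace ℝ V7 f = ∑ i, f (e i) i := by
  rw [LinearMap.trace_eq_matrix_trace ℝ (Pi.basisFun ℝ (Fin 7)), LinearMap.toMatrix_eq_toMatrix']
  refine Finset.sum_congr rfl fun i _ => ?_
  rw [Matrix.diag_apply, LinearMap.toMatrix'_apply]
  have : (fun j' => if j' = i then (1:ℝ) else 0) = e i := by
    funext j'; simp [e, Pi.single_apply]
  rfl


set_option maxHeartbeats 1000000 in
/-- The bracket satisfies the Jacobi identity (and is skew-symmetric), `φ` is a derivation
of it, and `φ` is pre-Einstein: `trace (φ ∘ ψ) = trace ψ` for every derivation `ψ`. -/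
theorem stmt :
    Skew c2 ∧ Jacobi c2 ∧
    diagL ![0, 1, 0, 1, 1, 1, 1] ∈ derivations c2 ∧
    ∀ ψ ∈ derivations c2,
      LinearMap.trace ℝ V7 (diagL ![0, 1, 0, 1, 1, 1, 1] ∘ₗ ψ) = LinearMap.trace ℝ V7 ψ := by
  refine ⟨skew_c2, jacobi_c2, phi_der, ?_⟩
  intro ψ hmem
  have hψ : ∀ x y : V7, ψ (br c2 x y) = br c2 (ψ x) y + br c2 x (ψ y) := hmem
  have H1 := hψ (e 0) (e 1); rw [hb01] at H1
  have H2 := hψ (e 0) (e 3); rw [hb03] at H2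
  have H3 := hψ (e 0) (e 4); rw [hb04] at H3
  have H4 := hψ (e 0) (e 5); rw [hb05] at H4
  have H5 := hψ (e 1) (e 2); rw [hb12, map_add] at H5
  have E11 := congrFun H1 1
  have E13 := congrFun H1 3
  have E14 := congrFun H1 4
  have E15 := congrFun H1 5
  have E21 := congrFun H2 1
  have E23 := congrFun H2 3
  have E24 := congrFun H2 4
  have E25 := congrFun H2 5
  have E26 := congrFun H2 6
  have E33 := congrFun H3 3
  have E34 := congrFun H3 4
  have E35 := congrFun H3 5
  have E36 := congrFun H3 6
  have E44 := congrFun H4 4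
  have E45 := congrFun H4 5
  have E46 := congrFun H4 6
  have E54 := congrFun H5 4
  have E55 := congrFun H5 5
  have E56 := congrFun H5 6
  simp [Pi.add_apply, LinearMap.add_apply, br_er, br_el, Fin.sum_univ_seven, c2_cast, cZ, toCZ, LZ] at E11 E13 E14 E15 E21 E23 E24 E25 E26 E33 E34 E35 E36 E44 E45 E46 E54 E55 E56
  rw [trace_eq, trace_eq]
  simp only [LinearMap.comp_apply, diagL_apply, Fin.sum_univ_seven]
  norm_num [show (![0,1,0,1,1,1,1] : Fin 7 → ℝ) 2 = 0 from rfl,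
    show (![0,1,0,1,1,1,1] : Fin 7 → ℝ) 3 = 1 from rfl,
    show (![0,1,0,1,1,1,1] : Fin 7 → ℝ) 4 = 1 from rfl,
    show (![0,1,0,1,1,1,1] : Fin 7 → ℝ) 5 = 1 from rfl,
    show (![0,1,0,1,1,1,1] : Fin 7 → ℝ) 6 = 1 from rfl]
  linarith [E11, E13, E14, E15, E21, E23, E24, E25, E26, E33, E34, E35, E36, E44, E45, E46, E54, E55, E56]
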